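/- Approximate stabilization of the intermediate step: let ρ be a density operator on H ⊗ H', R a reflection on H, S a reflection on H' with (1 + tr((R⊗S)ρ))/2 ≥ 1 − ε, and T an operator on H with ‖T‖ ≤ c. Then |tr(RTρ) − tr((T⊗S)ρ)| ≤ O(c·sqrt(ε)) and |tr(TRρ) − tr((T⊗S)ρ)| ≤ O(c·sqrt(ε)). -/

import Mathlib

open Matrix
open scoped ComplexOrder Kronecker

set_option synthInstance.maxHeartbeats 1000000
set_option maxHeartbeats 1000000
set_option linter.unusedSectionVars false

namespace Stmt13Aux

variable {ι κ : Type*} [Fintype ι] [DecidableEq ι] [Fintype κ] [DecidableEq κ]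

omit [DecidableEq ι] in
lemma psd_sqrt {ρ : Matrix ι ι ℂ} (hρ : ρ.PosSemidef) :
    ∃ σ : Matrix ι ι ℂ, σᴴ = σ ∧ σ * σ = ρ := by
  classical
  open scoped MatrixOrder in
  exact ⟨CFC.sqrt ρ, (CFC.sqrt_nonneg ρ).posSemidef.isHermitian,
    CFC.sqrt_mul_sqrt_self ρ hρ.nonneg⟩

omit [DecidableEq ι] in
lemma psd_decomp {ρ : Matrix ι ι ℂ} (hρ : ρ.PosSemidef) :
    ∃ C : Matrix ι ι ℂ, ρ = Cᴴ * C := by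
  obtain ⟨σ, h1, h2⟩ := psd_sqrt hρ
  exact ⟨σ, by rw [h1, h2]⟩

omit [Fintype ι] [DecidableEq ι] [Fintype κ] [DecidableEq κ] in
lemma kron_conjTranspose (A : Matrix ι ι ℂ) (B : Matrix κ κ ℂ) :
    (A ⊗ₖ B)ᴴ = Aᴴ ⊗ₖ Bᴴ := by
  ext ⟨i, j⟩ ⟨k, l⟩
  simp [conjTranspose_apply, kroneckerMap_apply, mul_comm]

lemma posSemidef_kron {A : Matrix ι ι ℂ} {B : Matrix κ κ ℂ}
    (hA : A.PosSemidef) (hB : B.PosSemidef) : (A ⊗ₖ B).PosSemidef := by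
  obtain ⟨C, rfl⟩ := psd_decomp hA
  obtain ⟨D, rfl⟩ := psd_decomp hB
  rw [mul_kronecker_mul, ← kron_conjTranspose]
  exact posSemidef_conjTranspose_mul_self _

lemma trace_nonneg' {A : Matrix ι ι ℂ} (hA : A.PosSemidef) : 0 ≤ A.trace := by
  rw [Matrix.trace]
  apply Finset.sum_nonneg
  intro i _
  have h := hA.dotProduct_mulVec_nonneg (Pi.single i 1)
  simpa [dotProduct, Matrix.mulVec, Pi.single_apply, apply_ite, mul_ite,
    Finset.sum_ite_eq, Finset.sum_ite_eq'] using h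

lemma trace_mul_psd_nonneg {Q ρ : Matrix ι ι ℂ} (hQ : Q.PosSemidef) (hρ : ρ.PosSemidef) :
    0 ≤ (Q * ρ).trace := by
  obtain ⟨C, rfl⟩ := psd_decomp hQ
  rw [mul_assoc, trace_mul_comm, mul_assoc, ← mul_assoc]
  exact trace_nonneg' (hρ.mul_mul_conjTranspose_same C)

omit [DecidableEq ι] in
lemma trace_form (M N : Matrix ι ι ℂ) :
    (Mᴴ * N).trace = ∑ p : ι × ι, (starRingEnd ℂ) (M p.1 p.2) * N p.1 p.2 := by
  rw [← Finset.univ_product_univ, Finset.sum_product]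
  rw [Matrix.trace]
  simp only [Matrix.diag_apply, Matrix.mul_apply, Matrix.conjTranspose_apply]
  rw [Finset.sum_comm]
  simp [Complex.star_def]

omit [DecidableEq ι] in
lemma abs_trace_cs (A B : Matrix ι ι ℂ) :
    ‖((Aᴴ * B).trace)‖ ≤
      Real.sqrt ((Aᴴ * A).trace.re) * Real.sqrt ((Bᴴ * B).trace.re) := by
  classical
  set f : Matrix ι ι ℂ → EuclideanSpace ℂ (ι × ι) :=
    fun M => WithLp.toLp 2 (fun p : ι × ι => M p.1 p.2) with hf
  have hinner : ∀ M N : Matrix ι ι ℂ, (inner ℂ (f M) (f N) : ℂ) = (Mᴴ * N).trace := by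
    intro M N
    rw [trace_form]
    simp [hf, PiLp.inner_apply, RCLike.inner_apply, mul_comm]
  have hnorm : ∀ M : Matrix ι ι ℂ, ‖f M‖ = Real.sqrt ((Mᴴ * M).trace.re) := by
    intro M
    rw [EuclideanSpace.norm_eq]
    congr 1
    rw [trace_form]
    rw [Complex.re_sum]
    refine Finset.sum_congr rfl fun p _ => ?_
    simp [hf, Complex.sq_norm,
      Complex.normSq_apply, Complex.mul_re, Complex.conj_re, Complex.conj_im]
    try ring
  calc ‖((Aᴴ * B).trace)‖ = ‖(inner ℂ (f A) (f B) : ℂ)‖ := by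
        rw [hinner]
    _ ≤ ‖f A‖ * ‖f B‖ := norm_inner_le_norm _ _
    _ = _ := by rw [hnorm, hnorm]

lemma key {ρ : Matrix ι ι ℂ} (hρ : ρ.PosSemidef) (M N : Matrix ι ι ℂ) :
    ‖((M * N * ρ).trace)‖ ≤
      Real.sqrt ((M * Mᴴ * ρ).trace.re) * Real.sqrt ((Nᴴ * N * ρ).trace.re) := by
  obtain ⟨σ, hσh, hσ2⟩ := psd_sqrt hρ
  have key0 : ∀ U V : Matrix ι ι ℂ, ((Uᴴ * σ)ᴴ * (V * σ)).trace = (U * V * ρ).trace := by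
    intro U V
    rw [conjTranspose_mul, hσh, conjTranspose_conjTranspose]
    rw [show σ * U * (V * σ) = σ * (U * V * σ) by simp only [mul_assoc]]
    rw [trace_mul_comm, mul_assoc, hσ2]
  calc ‖((M * N * ρ).trace)‖
      = ‖(((Mᴴ * σ)ᴴ * (N * σ)).trace)‖ := by rw [key0 M N]
    _ ≤ Real.sqrt (((Mᴴ * σ)ᴴ * (Mᴴ * σ)).trace.re) *
        Real.sqrt (((N * σ)ᴴ * (N * σ)).trace.re) := abs_trace_cs _ _
    _ = _ := by
        rw [show ((Mᴴ * σ)ᴴ * (Mᴴ * σ)).trace = (M * Mᴴ * ρ).trace from key0 M Mᴴ,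
          show ((N * σ)ᴴ * (N * σ)).trace = (Nᴴ * N * ρ).trace from by
            simpa using key0 Nᴴ N]

lemma opnorm_psd {n : ℕ} (T : Matrix (Fin n) (Fin n) ℂ) (c : ℝ)
    (hT : ‖(Matrix.toEuclideanCLM (𝕜 := ℂ) T :
        EuclideanSpace ℂ (Fin n) →L[ℂ] EuclideanSpace ℂ (Fin n))‖ ≤ c) :
    (((c ^ 2 : ℝ) : ℂ) • (1 : Matrix (Fin n) (Fin n) ℂ) - Tᴴ * T).PosSemidef := by
  have hc : 0 ≤ c := le_trans (norm_nonneg _) hT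
  have normsq : ∀ v : Fin n → ℂ,
      ‖((WithLp.equiv 2 ((i : Fin n) → ℂ)).symm v : EuclideanSpace ℂ (Fin n))‖ ^ 2
        = ∑ i, Complex.normSq (v i) := by
    intro v
    rw [EuclideanSpace.norm_eq, Real.sq_sqrt (Finset.sum_nonneg fun i _ => sq_nonneg _)]
    simp [Complex.sq_norm]
  refine PosSemidef.of_dotProduct_mulVec_nonneg ?_ ?_
  · simp [Matrix.IsHermitian, conjTranspose_smul, conjTranspose_mul, sub_eq_sub_iff_comm,
      Complex.star_def, Complex.conj_ofReal]
  · intro x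
    have hTx : star x ⬝ᵥ ((Tᴴ * T) *ᵥ x) = star (T *ᵥ x) ⬝ᵥ (T *ᵥ x) := by
      rw [← mulVec_mulVec, dotProduct_mulVec, ← star_mulVec]
    have hdot : ∀ v : Fin n → ℂ, star v ⬝ᵥ v = ((∑ i, Complex.normSq (v i) : ℝ) : ℂ) := by
      intro v
      simp [dotProduct, Complex.star_def, ← Complex.normSq_eq_conj_mul_self]
    set y : EuclideanSpace ℂ (Fin n) := (WithLp.equiv 2 _).symm x with hy
    have h1 : Matrix.toEuclideanCLM (𝕜 := ℂ) T y = (WithLp.equiv 2 _).symm (T *ᵥ x) := by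
      simp [hy, Matrix.toLin'_apply]
    have h2 : ‖((WithLp.equiv 2 ((i : Fin n) → ℂ)).symm (T *ᵥ x) :
        EuclideanSpace ℂ (Fin n))‖ ≤ c * ‖y‖ := by
      rw [← h1]
      exact ((Matrix.toEuclideanCLM (𝕜 := ℂ) T).le_opNorm y).trans
        (mul_le_mul_of_nonneg_right hT (norm_nonneg y))
    have h3 : ∑ i, Complex.normSq ((T *ᵥ x) i) ≤ c ^ 2 * ∑ i, Complex.normSq (x i) := by
      have := pow_le_pow_left₀ (norm_nonneg _) h2 2
      rw [normsq, mul_pow, hy, normsq] at this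
      linarith [this]
    rw [sub_mulVec, dotProduct_sub, smul_mulVec, one_mulVec, dotProduct_smul, hTx,
      hdot, hdot, smul_eq_mul, ← Complex.ofReal_mul, ← Complex.ofReal_sub]
    rw [Complex.zero_le_real]
    linarith

lemma opnorm_psd' {n : ℕ} (T : Matrix (Fin n) (Fin n) ℂ) (c : ℝ)
    (hT : ‖(Matrix.toEuclideanCLM (𝕜 := ℂ) T :
        EuclideanSpace ℂ (Fin n) →L[ℂ] EuclideanSpace ℂ (Fin n))‖ ≤ c) :
    (((c ^ 2 : ℝ) : ℂ) • (1 : Matrix (Fin n) (Fin n) ℂ) - T * Tᴴ).PosSemidef := by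
  have hT' : ‖(Matrix.toEuclideanCLM (𝕜 := ℂ) Tᴴ :
      EuclideanSpace ℂ (Fin n) →L[ℂ] EuclideanSpace ℂ (Fin n))‖ ≤ c := by
    rw [show Tᴴ = star T from rfl, map_star, ContinuousLinearMap.star_eq_adjoint]
    rw [LinearIsometryEquiv.norm_map]
    exact hT
  simpa using opnorm_psd Tᴴ c hT'

end Stmt13Aux

open Stmt13Aux

/-- there is an absolute constant `K` such that for every state
`ρ` on `H ⊗ H'`, reflections `R` on `H` and `S` on `H'` with
`(1 + tr((R⊗S)ρ))/2 ≥ 1 − ε`, and every `T` on `H` with `‖T‖ ≤ c`: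
`|tr(R T ρ) − tr((T⊗S)ρ)| ≤ K c √ε` and `|tr(T R ρ) − tr((T⊗S)ρ)| ≤ K c √ε`. -/
theorem stmt_13 :
    ∃ K : ℝ, 0 < K ∧
      ∀ (n m : ℕ) (ρ : Matrix (Fin n × Fin m) (Fin n × Fin m) ℂ)
        (T R : Matrix (Fin n) (Fin n) ℂ) (S : Matrix (Fin m) (Fin m) ℂ) (c ε : ℝ),
        ρ.PosSemidef → ρ.trace = 1 →
        Rᴴ = R → R * R = 1 → Sᴴ = S → S * S = 1 →
        ‖(Matrix.toEuclideanCLM (𝕜 := ℂ) T :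
            EuclideanSpace ℂ (Fin n) →L[ℂ] EuclideanSpace ℂ (Fin n))‖ ≤ c →
        0 ≤ ε →
        (1 + (((R ⊗ₖ S) * ρ).trace).re) / 2 ≥ 1 - ε →
        ‖(((R * T) ⊗ₖ (1 : Matrix (Fin m) (Fin m) ℂ)) * ρ).trace
            - ((T ⊗ₖ S) * ρ).trace‖ ≤ K * c * Real.sqrt ε ∧
        ‖(((T * R) ⊗ₖ (1 : Matrix (Fin m) (Fin m) ℂ)) * ρ).trace
            - ((T ⊗ₖ S) * ρ).trace‖ ≤ K * c * Real.sqrt ε := by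
  refine ⟨2, by norm_num, ?_⟩
  intro n m ρ T R S c ε hρ hρtr hRH hR2 hSH hS2 hT hε hcons
  have hc : 0 ≤ c := le_trans (norm_nonneg _) hT
  set P : Matrix (Fin n × Fin m) (Fin n × Fin m) ℂ := R ⊗ₖ S with hP
  set X : Matrix (Fin n × Fin m) (Fin n × Fin m) ℂ := T ⊗ₖ S with hX
  have hP2 : P * P = 1 := by rw [hP, ← mul_kronecker_mul, hR2, hS2, one_kronecker_one]
  have hPH : Pᴴ = P := by rw [hP, kron_conjTranspose, hRH, hSH]
  have hPmH : (P - 1)ᴴ = P - 1 := by rw [conjTranspose_sub, hPH, conjTranspose_one]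
  have hPX : P * X = (R * T) ⊗ₖ (1 : Matrix (Fin m) (Fin m) ℂ) := by
    rw [hP, hX, ← mul_kronecker_mul, hS2]
  have hXP : X * P = (T * R) ⊗ₖ (1 : Matrix (Fin m) (Fin m) ℂ) := by
    rw [hP, hX, ← mul_kronecker_mul, hS2]
  have hXX : Xᴴ * X = (Tᴴ * T) ⊗ₖ (1 : Matrix (Fin m) (Fin m) ℂ) := by
    rw [hX, kron_conjTranspose, hSH, ← mul_kronecker_mul, hS2]
  have hXX' : X * Xᴴ = (T * Tᴴ) ⊗ₖ (1 : Matrix (Fin m) (Fin m) ℂ) := by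
    rw [hX, kron_conjTranspose, hSH, ← mul_kronecker_mul, hS2]
  -- the (P-1)² trace bound
  have hre : (((P - 1) * (P - 1) * ρ).trace).re ≤ 4 * ε := by
    have e : (P - 1) * (P - 1) * ρ = P * P * ρ - P * ρ - P * ρ + ρ := by noncomm_ring
    rw [hP2, one_mul] at e
    rw [e]
    have e2 : (ρ - P * ρ - P * ρ + ρ).trace
        = ρ.trace - (P * ρ).trace - (P * ρ).trace + ρ.trace := by
      simp [Matrix.trace_sub, Matrix.trace_add]
    rw [e2, hρtr]
    have hcon : 1 - 2 * ε ≤ ((P * ρ).trace).re := by linarith [hcons]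
    simp only [Complex.add_re, Complex.sub_re, Complex.one_re]
    linarith
  -- the c² bound
  have hb : ∀ (M : Matrix (Fin n) (Fin n) ℂ),
      (((c ^ 2 : ℝ) : ℂ) • (1 : Matrix (Fin n) (Fin n) ℂ) - M).PosSemidef →
      (((M ⊗ₖ (1 : Matrix (Fin m) (Fin m) ℂ)) * ρ).trace).re ≤ c ^ 2 := by
    intro M hM
    have hkr : ((((c ^ 2 : ℝ) : ℂ) • (1 : Matrix (Fin n) (Fin n) ℂ) - M)
          ⊗ₖ (1 : Matrix (Fin m) (Fin m) ℂ))
        = ((c ^ 2 : ℝ) : ℂ) • (1 : Matrix (Fin n × Fin m) (Fin n × Fin m) ℂ)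
          - M ⊗ₖ (1 : Matrix (Fin m) (Fin m) ℂ) := by
      rw [show ((((c ^ 2 : ℝ) : ℂ) • (1 : Matrix (Fin n) (Fin n) ℂ) - M)
            ⊗ₖ (1 : Matrix (Fin m) (Fin m) ℂ))
          = (((c ^ 2 : ℝ) : ℂ) • (1 : Matrix (Fin n) (Fin n) ℂ))
              ⊗ₖ (1 : Matrix (Fin m) (Fin m) ℂ)
            - M ⊗ₖ (1 : Matrix (Fin m) (Fin m) ℂ) from by
        ext ⟨i, j⟩ ⟨k, l⟩
        simp [kroneckerMap_apply, sub_mul]]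
      rw [smul_kronecker, one_kronecker_one]
    have h0 : 0 ≤ ((((c ^ 2 : ℝ) : ℂ) • (1 : Matrix (Fin n × Fin m) (Fin n × Fin m) ℂ)
        - M ⊗ₖ (1 : Matrix (Fin m) (Fin m) ℂ)) * ρ).trace := by
      rw [← hkr]
      exact trace_mul_psd_nonneg (posSemidef_kron hM Matrix.PosSemidef.one) hρ
    have e : ((((c ^ 2 : ℝ) : ℂ) • (1 : Matrix (Fin n × Fin m) (Fin n × Fin m) ℂ)
          - M ⊗ₖ (1 : Matrix (Fin m) (Fin m) ℂ)) * ρ).trace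
        = ((c ^ 2 : ℝ) : ℂ) * ρ.trace
          - ((M ⊗ₖ (1 : Matrix (Fin m) (Fin m) ℂ)) * ρ).trace := by
      rw [sub_mul, Matrix.trace_sub, smul_mul_assoc, one_mul, Matrix.trace_smul,
        smul_eq_mul]
    rw [e, hρtr, mul_one] at h0
    have h0' := (Complex.le_def.mp h0).1
    simp only [Complex.zero_re, Complex.sub_re, Complex.ofReal_re] at h0'
    linarith
  have s1 : Real.sqrt ((((P - 1) * (P - 1) * ρ).trace).re) ≤ 2 * Real.sqrt ε := by
    calc Real.sqrt ((((P - 1) * (P - 1) * ρ).trace).re)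
        ≤ Real.sqrt (4 * ε) := Real.sqrt_le_sqrt hre
      _ = 2 * Real.sqrt ε := by
          rw [show (4 : ℝ) * ε = 2 ^ 2 * ε by ring, Real.sqrt_mul (by positivity),
            Real.sqrt_sq (by norm_num)]
  have s2 : Real.sqrt (((Xᴴ * X * ρ).trace).re) ≤ c := by
    calc Real.sqrt (((Xᴴ * X * ρ).trace).re)
        ≤ Real.sqrt (c ^ 2) := Real.sqrt_le_sqrt (by
            rw [hXX]; exact hb (Tᴴ * T) (opnorm_psd T c hT))
      _ = c := Real.sqrt_sq hc
  have s3 : Real.sqrt (((X * Xᴴ * ρ).trace).re) ≤ c := by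
    calc Real.sqrt (((X * Xᴴ * ρ).trace).re)
        ≤ Real.sqrt (c ^ 2) := Real.sqrt_le_sqrt (by
            rw [hXX']; exact hb (T * Tᴴ) (opnorm_psd' T c hT))
      _ = c := Real.sqrt_sq hc
  constructor
  · have k1 := key hρ (P - 1) X
    rw [hPmH] at k1
    have d1 : (P * X * ρ).trace - (X * ρ).trace = ((P - 1) * X * ρ).trace := by
      rw [show (P - 1) * X * ρ = P * X * ρ - X * ρ by noncomm_ring, Matrix.trace_sub]
    rw [← hPX]
    rw [show P * X * ρ = (P * X) * ρ from rfl] at d1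
    rw [← d1] at k1
    refine k1.trans ?_
    calc Real.sqrt ((((P - 1) * (P - 1) * ρ).trace).re) * Real.sqrt (((Xᴴ * X * ρ).trace).re)
        ≤ (2 * Real.sqrt ε) * c :=
          mul_le_mul s1 s2 (Real.sqrt_nonneg _) (by positivity)
      _ = 2 * c * Real.sqrt ε := by ring
  · have k2 := key hρ X (P - 1)
    rw [hPmH] at k2
    have d2 : (X * P * ρ).trace - (X * ρ).trace = (X * (P - 1) * ρ).trace := by
      rw [show X * (P - 1) * ρ = X * P * ρ - X * ρ by noncomm_ring, Matrix.trace_sub]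
    rw [← hXP]
    rw [← d2] at k2
    refine k2.trans ?_
    calc Real.sqrt (((X * Xᴴ * ρ).trace).re) * Real.sqrt ((((P - 1) * (P - 1) * ρ).trace).re)
        ≤ c * (2 * Real.sqrt ε) :=
          mul_le_mul s3 s1 (Real.sqrt_nonneg _) hc
      _ = 2 * c * Real.sqrt ε := by ring
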